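/- If q is a primitive m-th root of unity in K, then the elements Z11^m, Z12^m, Z21^m and Z22^m are central in Mat₂(q). -/

import Mathlib

noncomputable section

open FreeAlgebra MulOpposite

/-- The relations of the Dipper–Donkin quantized matrix algebra of rank 2:
`Z12·Z11 = Z11·Z12`, `Z21·Z11 = q·Z11·Z21`, `Z22·Z21 = Z21·Z22`, `Z22·Z12 = q·Z12·Z22`,
`Z21·Z12 = q·Z12·Z21`, `Z22·Z11 = Z11·Z22 + (q−1)·Z12·Z21`, where the generators
`Z11, Z12, Z21, Z22` are the images of `0, 1, 2, 3 : Fin 4`. -/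
inductive DDrel {K : Type*} [Field K] (q : K) :
    FreeAlgebra K (Fin 4) → FreeAlgebra K (Fin 4) → Prop
  | r1 : DDrel q (ι K (1 : Fin 4) * ι K (0 : Fin 4)) (ι K (0 : Fin 4) * ι K (1 : Fin 4))
  | r2 : DDrel q (ι K (2 : Fin 4) * ι K (0 : Fin 4)) (q • (ι K (0 : Fin 4) * ι K (2 : Fin 4)))
  | r3 : DDrel q (ι K (3 : Fin 4) * ι K (2 : Fin 4)) (ι K (2 : Fin 4) * ι K (3 : Fin 4))
  | r4 : DDrel q (ι K (3 : Fin 4) * ι K (1 : Fin 4)) (q • (ι K (1 : Fin 4) * ι K (3 : Fin 4)))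
  | r5 : DDrel q (ι K (2 : Fin 4) * ι K (1 : Fin 4)) (q • (ι K (1 : Fin 4) * ι K (2 : Fin 4)))
  | r6 : DDrel q (ι K (3 : Fin 4) * ι K (0 : Fin 4))
      (ι K (0 : Fin 4) * ι K (3 : Fin 4) + (q - 1) • (ι K (1 : Fin 4) * ι K (2 : Fin 4)))

/-- The Dipper–Donkin quantized matrix algebra `Mat₂(q)`: the quotient of the free
`K`-algebra on four generators by the two-sided ideal generated by the relations above. -/
abbrev DDMat2 {K : Type*} [Field K] (q : K) := RingQuot (DDrel q)

variable {K : Type*} [Field K]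

/-- The generator `Z11` of `Mat₂(q)`. -/
def Z11 (q : K) : DDMat2 q := RingQuot.mkAlgHom K (DDrel q) (ι K (0 : Fin 4))
/-- The generator `Z12` of `Mat₂(q)`. -/
def Z12 (q : K) : DDMat2 q := RingQuot.mkAlgHom K (DDrel q) (ι K (1 : Fin 4))
/-- The generator `Z21` of `Mat₂(q)`. -/
def Z21 (q : K) : DDMat2 q := RingQuot.mkAlgHom K (DDrel q) (ι K (2 : Fin 4))
/-- The generator `Z22` of `Mat₂(q)`. -/
def Z22 (q : K) : DDMat2 q := RingQuot.mkAlgHom K (DDrel q) (ι K (3 : Fin 4))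

section Aux
variable (q : K)

local notation "a" => Z11 q
local notation "b" => Z12 q
local notation "c" => Z21 q
local notation "d" => Z22 q

lemma hba : b * a = a * b := by
  simpa only [Z11, Z12, map_mul] using RingQuot.mkAlgHom_rel K (DDrel.r1 (q := q))

lemma hca : c * a = q • (a * c) := by
  simpa only [Z11, Z21, map_mul, map_smul] using RingQuot.mkAlgHom_rel K (DDrel.r2 (q := q))

lemma hdc : d * c = c * d := by
  simpa only [Z21, Z22, map_mul] using RingQuot.mkAlgHom_rel K (DDrel.r3 (q := q))

lemma hdb : d * b = q • (b * d) := by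
  simpa only [Z12, Z22, map_mul, map_smul] using RingQuot.mkAlgHom_rel K (DDrel.r4 (q := q))

lemma hcb : c * b = q • (b * c) := by
  simpa only [Z12, Z21, map_mul, map_smul] using RingQuot.mkAlgHom_rel K (DDrel.r5 (q := q))

lemma hda : d * a = a * d + (q - 1) • (b * c) := by
  simpa only [Z11, Z12, Z21, Z22, map_mul, map_smul, map_add] using
    RingQuot.mkAlgHom_rel K (DDrel.r6 (q := q))

lemma central_of (z : DDMat2 q)
    (h0 : z * a = a * z) (h1 : z * b = b * z)
    (h2 : z * c = c * z) (h3 : z * d = d * z) :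
    ∀ x : DDMat2 q, z * x = x * z := by
  intro x
  obtain ⟨y, rfl⟩ := RingQuot.mkAlgHom_surjective K (DDrel q) x
  induction y using FreeAlgebra.induction with
  | grade0 r => simp [AlgHom.commutes, Algebra.commutes]
  | grade1 i => fin_cases i
                · exact h0
                · exact h1
                · exact h2
                · exact h3
  | mul u v hu hv => rw [map_mul, ← mul_assoc, hu, mul_assoc, hv, mul_assoc]
  | add u v hu hv => rw [map_add, mul_add, add_mul, hu, hv]

end Aux

section PowAux
variable {A : Type*} [Ring A] [Algebra K A] (q : K) (z g : A)

lemma pow_smul_left (h : g * z = q • (z * g)) : ∀ n : ℕ, g * z ^ n = q ^ n • (z ^ n * g) := by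
  intro n
  induction n with
  | zero => simp
  | succ n ih =>
      rw [pow_succ, ← mul_assoc, ih, smul_mul_assoc, mul_assoc, h, mul_smul_comm,
        smul_smul, ← mul_assoc, ← pow_succ, ← pow_succ]

lemma pow_smul_right (h : z * g = q • (g * z)) : ∀ n : ℕ, z ^ n * g = q ^ n • (g * z ^ n) := by
  intro n
  induction n with
  | zero => simp
  | succ n ih =>
      rw [pow_succ', mul_assoc, ih, mul_smul_comm, ← mul_assoc, h, smul_mul_assoc,
        smul_smul, mul_assoc, ← pow_succ', ← pow_succ]

end PowAux

section Main
variable (q : K)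

local notation "a" => Z11 q
local notation "b" => Z12 q
local notation "c" => Z21 q
local notation "d" => Z22 q

lemma hbca : (b * c) * a = q • (a * (b * c)) := by
  rw [mul_assoc, hca, mul_smul_comm, ← mul_assoc, hba, mul_assoc]

lemma hdbc : d * (b * c) = q • ((b * c) * d) := by
  rw [← mul_assoc, hdb, smul_mul_assoc, mul_assoc, hdc, ← mul_assoc]

lemma hd_pow_a : ∀ n : ℕ, d * a ^ (n + 1) = a ^ (n + 1) * d + (q ^ (n + 1) - 1) • (a ^ n * (b * c)) := by
  intro n
  induction n with
  | zero => simp [hda]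
  | succ n ih =>
      have step : d * a ^ (n + 2) = (d * a ^ (n + 1)) * a := by rw [pow_succ, ← mul_assoc]
      rw [step, ih, add_mul, smul_mul_assoc, mul_assoc (Z11 q ^ (n + 1)), hda,
        mul_assoc (Z11 q ^ n), hbca, mul_add, mul_smul_comm, mul_smul_comm, smul_smul]
      have h1 : Z11 q ^ (n + 1) * (Z11 q * Z22 q) = Z11 q ^ (n + 1 + 1) * Z22 q := by
        rw [← mul_assoc, ← pow_succ]
      have h2 : Z11 q ^ n * (Z11 q * (Z12 q * Z21 q)) = Z11 q ^ (n + 1) * (Z12 q * Z21 q) := by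
        rw [← mul_assoc, ← pow_succ]
      rw [h1, h2, add_assoc, ← add_smul,
        show (q - 1) + (q ^ (n + 1) - 1) * q = q ^ (n + 1 + 1) - 1 from by ring]

lemma ha_pow_d : ∀ n : ℕ, a * d ^ (n + 1) = d ^ (n + 1) * a - (q ^ (n + 1) - 1) • ((b * c) * d ^ n) := by
  intro n
  have had : a * d = d * a - (q - 1) • (b * c) := eq_sub_iff_add_eq.mpr (hda q).symm
  induction n with
  | zero => simp [had]
  | succ n ih =>
      have step : a * d ^ (n + 2) = (a * d ^ (n + 1)) * d := by rw [pow_succ, ← mul_assoc]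
      rw [step, ih, sub_mul, smul_mul_assoc, mul_assoc (Z12 q * Z21 q), ← pow_succ,
        mul_assoc (Z22 q ^ (n + 1)), had, mul_sub, mul_smul_comm,
        pow_smul_right q (Z22 q) (Z12 q * Z21 q) (hdbc q) (n + 1), smul_smul]
      have h1 : Z22 q ^ (n + 1) * (Z22 q * Z11 q) = Z22 q ^ (n + 1 + 1) * Z11 q := by
        rw [← mul_assoc, ← pow_succ]
      rw [h1, sub_sub, ← add_smul,
        show (q - 1) * q ^ (n + 1) + (q ^ (n + 1) - 1) = q ^ (n + 1 + 1) - 1 from by ring]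

end Main

/-- If `q` is a primitive `m`-th root of unity in `K`, then
`Z11^m`, `Z12^m`, `Z21^m` and `Z22^m` are central elements of `Mat₂(q)`. -/
theorem DDMat2_pow_central (q : K) (hq : q ≠ 0) (m : ℕ)
    (hq1 : q ^ m = 1) (hq2 : ∀ k : ℕ, 1 ≤ k → k < m → q ^ k ≠ 1) :
    (∀ x : DDMat2 q, Z11 q ^ m * x = x * Z11 q ^ m) ∧
    (∀ x : DDMat2 q, Z12 q ^ m * x = x * Z12 q ^ m) ∧
    (∀ x : DDMat2 q, Z21 q ^ m * x = x * Z21 q ^ m) ∧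
    (∀ x : DDMat2 q, Z22 q ^ m * x = x * Z22 q ^ m) := by
  rcases m with _ | n
  · exact ⟨fun x => by simp, fun x => by simp, fun x => by simp, fun x => by simp⟩
  set m := n + 1 with hm
  have hsub : q ^ m - 1 = 0 := by rw [hq1]; ring
  have cba : Commute (Z12 q) (Z11 q) := hba q
  have cdc : Commute (Z22 q) (Z21 q) := hdc q
  refine ⟨?_, ?_, ?_, ?_⟩
  · apply central_of q
    · exact ((Commute.refl (Z11 q)).pow_left m).eq
    · exact (cba.symm.pow_left m).eq
    · rw [pow_smul_left q (Z11 q) (Z21 q) (hca q) m, hq1, one_smul]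
    · rw [hd_pow_a q n, hsub, zero_smul, add_zero]
  · apply central_of q
    · exact (cba.pow_left m).eq
    · exact ((Commute.refl (Z12 q)).pow_left m).eq
    · rw [pow_smul_left q (Z12 q) (Z21 q) (hcb q) m, hq1, one_smul]
    · rw [pow_smul_left q (Z12 q) (Z22 q) (hdb q) m, hq1, one_smul]
  · apply central_of q
    · rw [pow_smul_right q (Z21 q) (Z11 q) (hca q) m, hq1, one_smul]
    · rw [pow_smul_right q (Z21 q) (Z12 q) (hcb q) m, hq1, one_smul]
    · exact ((Commute.refl (Z21 q)).pow_left m).eq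
    · exact (cdc.symm.pow_left m).eq
  · apply central_of q
    · have := ha_pow_d q n
      rw [hsub, zero_smul, sub_zero] at this
      exact this.symm
    · rw [pow_smul_right q (Z22 q) (Z12 q) (hdb q) m, hq1, one_smul]
    · exact (cdc.pow_left m).eq
    · exact ((Commute.refl (Z22 q)).pow_left m).eq
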